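/- (Identification of the untreated-stratum outcome, ATU-type identification) Let Y, A, R, A*, Y1, Y0 be Bool-valued random variables on a probability space (Ω, ℙ) such that: (consistency) Y ω = if A ω then Y1 ω else Y0 ω for all ω; (non-experimental data) A ω = A* ω for all ω with R ω = false; (fusion) the triple (Y1, Y0, A*) is independent of R; (randomization) Y1 and A are independent under the conditional measure ℙ[· | R = true]; and ℙ(A = true ∧ R = true) > 0, ℙ(A* = true ∧ R = false) > 0, ℙ(A* = false ∧ R = false) > 0. Then ℙ(Y1 = true | A* = false) = (ℙ(Y = true | A = true ∧ R = true) − ℙ(A = true | R = false) · ℙ(Y = true | A = true ∧ R = false)) / ℙ(A = false | R = false); i.e., the death probability under treatment among those who would naturally decline treatment is identified by combining the experimental and non-experimental data. -/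

import Mathlib

open MeasureTheory ProbabilityTheory

/-- ATU-type identification: under consistency, the non-experimental data
condition, fusion, and randomization of treatment in the experiment, the death
probability under treatment among those who would naturally decline treatment
is identified by combining the experimental and non-experimental data. -/
theorem atu_identification
    {Ω : Type*} [MeasureSpace Ω] [IsProbabilityMeasure (ℙ : Measure Ω)]
    (Y A R As Y1 Y0 : Ω → Bool)
    (hY : Measurable Y) (hA : Measurable A) (hR : Measurable R)
    (hAs : Measurable As) (hY1 : Measurable Y1) (hY0 : Measurable Y0)
    (hcons : ∀ ω, Y ω = if A ω then Y1 ω else Y0 ω)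
    (hnonexp : ∀ ω, R ω = false → A ω = As ω)
    (hfusion : IndepFun (fun ω => (Y1 ω, Y0 ω, As ω)) R)
    (hrand : IndepFun Y1 A (ℙ[|{ω | R ω = true}]))
    (hpos1 : 0 < (ℙ {ω | A ω = true ∧ R ω = true}).toReal)
    (hpos2 : 0 < (ℙ {ω | As ω = true ∧ R ω = false}).toReal)
    (hpos3 : 0 < (ℙ {ω | As ω = false ∧ R ω = false}).toReal) :
    (ℙ {ω | Y1 ω = true ∧ As ω = false}).toReal /
        (ℙ {ω | As ω = false}).toReal =
      ((ℙ {ω | Y ω = true ∧ (A ω = true ∧ R ω = true)}).toReal /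
          (ℙ {ω | A ω = true ∧ R ω = true}).toReal -
        (ℙ {ω | A ω = true ∧ R ω = false}).toReal /
            (ℙ {ω | R ω = false}).toReal *
          ((ℙ {ω | Y ω = true ∧ (A ω = true ∧ R ω = false)}).toReal /
            (ℙ {ω | A ω = true ∧ R ω = false}).toReal)) /
        ((ℙ {ω | A ω = false ∧ R ω = false}).toReal /
          (ℙ {ω | R ω = false}).toReal) := by
  -- notation for real probabilities
  set r1 := (ℙ {ω | R ω = true}).toReal with hr1def
  set r0 := (ℙ {ω | R ω = false}).toReal with hr0def
  set y := (ℙ {ω | Y1 ω = true}).toReal with hydef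
  set a := (ℙ {ω | Y1 ω = true ∧ As ω = true}).toReal with hadef
  set b := (ℙ {ω | Y1 ω = true ∧ As ω = false}).toReal with hbdef
  set s1 := (ℙ {ω | As ω = true}).toReal with hs1def
  set s0 := (ℙ {ω | As ω = false}).toReal with hs0def
  -- derived independences from fusion
  have hf1 : IndepFun Y1 R ℙ := hfusion.comp measurable_fst measurable_id
  have hf2 : IndepFun (fun ω => (Y1 ω, As ω)) R ℙ :=
    hfusion.comp (measurable_fst.prodMk (measurable_snd.comp measurable_snd)) measurable_id
  have hf3 : IndepFun As R ℙ :=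
    hfusion.comp (measurable_snd.comp measurable_snd) measurable_id
  -- fusion product formulas, real form
  have MF1 : (ℙ ({ω | Y1 ω = true} ∩ {ω | R ω = true})).toReal = y * r1 := by
    have := hf1.measure_inter_preimage_eq_mul {true} {true}
      (measurableSet_singleton _) (measurableSet_singleton _)
    have h := congrArg ENNReal.toReal this
    rw [ENNReal.toReal_mul] at h; exact h
  have MF2 : (ℙ ({ω | Y1 ω = true ∧ As ω = true} ∩ {ω | R ω = false})).toReal = a * r0 := by
    have := hf2.measure_inter_preimage_eq_mul {(true, true)} {false}
      (measurableSet_singleton _) (measurableSet_singleton _)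
    have e2 : (fun ω => (Y1 ω, As ω)) ⁻¹' {(true, true)} = {ω | Y1 ω = true ∧ As ω = true} := by
      ext ω; simp [Prod.ext_iff]
    rw [e2] at this
    have h := congrArg ENNReal.toReal this
    rw [ENNReal.toReal_mul] at h; exact h
  have MF3 : (ℙ ({ω | As ω = true} ∩ {ω | R ω = false})).toReal = s1 * r0 := by
    have := hf3.measure_inter_preimage_eq_mul {true} {false}
      (measurableSet_singleton _) (measurableSet_singleton _)
    have h := congrArg ENNReal.toReal this
    rw [ENNReal.toReal_mul] at h; exact h
  have MF4 : (ℙ ({ω | As ω = false} ∩ {ω | R ω = false})).toReal = s0 * r0 := by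
    have := hf3.measure_inter_preimage_eq_mul {false} {false}
      (measurableSet_singleton _) (measurableSet_singleton _)
    have h := congrArg ENNReal.toReal this
    rw [ENNReal.toReal_mul] at h; exact h
  -- positivity
  have hr1pos : 0 < r1 := by
    refine lt_of_lt_of_le hpos1 ?_
    exact ENNReal.toReal_mono (measure_ne_top ℙ _)
      (measure_mono (fun ω h => h.2))
  have hr0pos : 0 < r0 := by
    refine lt_of_lt_of_le hpos2 ?_
    exact ENNReal.toReal_mono (measure_ne_top ℙ _)
      (measure_mono (fun ω h => h.2))
  have hAsR0t : (ℙ {ω | As ω = true ∧ R ω = false}).toReal = s1 * r0 := by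
    rw [← MF3]; rfl
  have hAsR0f : (ℙ {ω | As ω = false ∧ R ω = false}).toReal = s0 * r0 := by
    rw [← MF4]; rfl
  have hs1pos : 0 < s1 := by
    rw [hAsR0t] at hpos2
    by_contra h; push_neg at h; nlinarith
  have hs0pos : 0 < s0 := by
    rw [hAsR0f] at hpos3
    by_contra h; push_neg at h; nlinarith
  -- randomization: P(R1 ∩ (Y1 ∩ A)) = y * P(R1 ∩ A)
  have hmR1 : MeasurableSet {ω | R ω = true} := hR (measurableSet_singleton true)
  have hrand' := hrand.measure_inter_preimage_eq_mul {true} {true}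
    (measurableSet_singleton _) (measurableSet_singleton _)
  rw [cond_apply hmR1, cond_apply hmR1, cond_apply hmR1] at hrand'
  have hrandR := congrArg ENNReal.toReal hrand'
  have hpreY : (Y1 ⁻¹' {true} : Set Ω) = {ω | Y1 ω = true} := rfl
  have hpreA : (A ⁻¹' {true} : Set Ω) = {ω | A ω = true} := rfl
  rw [hpreY, hpreA] at hrandR
  simp only [ENNReal.toReal_mul, ENNReal.toReal_inv] at hrandR
  have hIC : (ℙ ({ω | R ω = true} ∩ {ω | Y1 ω = true})).toReal = y * r1 := by
    rw [Set.inter_comm]; exact MF1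
  rw [hIC] at hrandR
  have hrand2 : (ℙ ({ω | R ω = true} ∩ ({ω | Y1 ω = true} ∩ {ω | A ω = true}))).toReal
      = y * (ℙ ({ω | R ω = true} ∩ {ω | A ω = true})).toReal := by
    have hne : r1 ≠ 0 := ne_of_gt hr1pos
    field_simp at hrandR
    rw [← hr1def] at hrandR
    rw [div_eq_div_iff hne (pow_ne_zero 2 hne)] at hrandR
    apply mul_right_cancel₀ (pow_ne_zero 2 hne)
    linear_combination hrandR
  -- identify the experimental numerator
  have hS1 : {ω | Y ω = true ∧ (A ω = true ∧ R ω = true)}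
      = {ω | R ω = true} ∩ ({ω | Y1 ω = true} ∩ {ω | A ω = true}) := by
    ext ω
    cases h : A ω <;> simp [Set.mem_setOf_eq, hcons ω, h, Set.mem_preimage] <;> tauto
  have hS7 : {ω | A ω = true ∧ R ω = true} = {ω | R ω = true} ∩ {ω | A ω = true} := by
    ext ω; simp [Set.mem_setOf_eq, Set.mem_preimage]; tauto
  -- identify the non-experimental quantities
  have hS2 : {ω | Y ω = true ∧ (A ω = true ∧ R ω = false)}
      = {ω | Y1 ω = true ∧ As ω = true} ∩ {ω | R ω = false} := by
    ext ω
    cases hr : R ω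
    · have hAAs := hnonexp ω hr
      cases ha : A ω <;>
        simp [Set.mem_setOf_eq, hcons ω, ha, hr, ← hAAs] <;> tauto
    · simp [Set.mem_setOf_eq, hr]
  have hS3 : {ω | A ω = true ∧ R ω = false} = {ω | As ω = true} ∩ {ω | R ω = false} := by
    ext ω
    cases hr : R ω
    · have hAAs := hnonexp ω hr
      simp [Set.mem_setOf_eq, hr, ← hAAs]
    · simp [Set.mem_setOf_eq, hr]
  have hS4 : {ω | A ω = false ∧ R ω = false} = {ω | As ω = false} ∩ {ω | R ω = false} := by
    ext ω
    cases hr : R ω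
    · have hAAs := hnonexp ω hr
      simp [Set.mem_setOf_eq, hr, ← hAAs]
    · simp [Set.mem_setOf_eq, hr]
  -- decomposition y = a + b
  have hyab : y = a + b := by
    have hu : {ω | Y1 ω = true} =
        {ω | Y1 ω = true ∧ As ω = true} ∪ {ω | Y1 ω = true ∧ As ω = false} := by
      ext ω; cases h : As ω <;> simp [Set.mem_setOf_eq, h]
    have hd : Disjoint {ω | Y1 ω = true ∧ As ω = true} {ω | Y1 ω = true ∧ As ω = false} := by
      rw [Set.disjoint_left]
      rintro ω ⟨_, h1⟩ ⟨_, h2⟩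
      rw [h1] at h2; exact Bool.noConfusion h2
    have hm2 : MeasurableSet {ω | Y1 ω = true ∧ As ω = false} :=
      (hY1 (measurableSet_singleton true)).inter (hAs (measurableSet_singleton false))
    rw [hydef, hadef, hbdef, hu, measure_union hd hm2,
      ENNReal.toReal_add (measure_ne_top ℙ _) (measure_ne_top ℙ _)]
  -- put it together
  rw [hS1, hS2, hS3, hS4, hrand2, ← hS7]
  rw [show (ℙ ({ω | Y1 ω = true ∧ As ω = true} ∩ {ω | R ω = false})).toReal = a * r0 from MF2,
    show (ℙ ({ω | As ω = true} ∩ {ω | R ω = false})).toReal = s1 * r0 from MF3,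
    show (ℙ ({ω | As ω = false} ∩ {ω | R ω = false})).toReal = s0 * r0 from MF4]
  rw [hyab]
  have hq : (ℙ {ω | A ω = true ∧ R ω = true}).toReal ≠ 0 := ne_of_gt hpos1
  field_simp
  ring
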